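/- Let q₁, …, qₙ ≥ 2 be pairwise coprime integers with N = q₁⋯qₙ, and let 2 ≤ K ≤ N. For any two distinct integers x, y with 0 ≤ x < K and 0 ≤ y < K, the weighted distance between their residue vectors satisfies K · ∏_{i : x ≢ y (mod qᵢ)} qᵢ > N. -/

import Mathlib

/-- The weight of a set `I` of coordinates: the product of the moduli indexed by `I`. -/
def wtS {ι : Type} (q : ι → ℕ) (I : Finset ι) : ℕ := ∏ i ∈ I, q i

/-- The weighted distance between two vectors of `ℤ/q₁ℤ × ⋯ × ℤ/qₙℤ`. -/
def wdist {ι : Type} [Fintype ι] (q : ι → ℕ) (a b : ∀ i : ι, ZMod (q i)) : ℕ :=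
  ∏ i ∈ Finset.univ.filter (fun i => a i ≠ b i), q i

/-- The minimum weighted distance of an integer code `C ⊆ ℤ/q₁ℤ × ⋯ × ℤ/qₙℤ`. -/
noncomputable def minDist {ι : Type} [Fintype ι] (q : ι → ℕ)
    (C : Finset (∀ i : ι, ZMod (q i))) : ℕ :=
  sInf {d : ℕ | ∃ a ∈ C, ∃ b ∈ C, a ≠ b ∧ d = wdist q a b}

/-- The Chinese Remainder code: residue vectors of the integers `0 ≤ x < K`. -/
def CRcode {ι : Type} [Fintype ι] [DecidableEq ι] (q : ι → ℕ) (K : ℕ) :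
    Finset (∀ i : ι, ZMod (q i)) :=
  (Finset.range K).image (fun x => fun i => (x : ZMod (q i)))

/-- For pairwise coprime moduli and `2 ≤ K ≤ N`, any two distinct integers
`0 ≤ x, y < K` have residue vectors at weighted distance `> N / K`, i.e.
`K * ∏_{i : x ≢ y mod qᵢ} qᵢ > N`. -/
theorem statement2 {n : ℕ} (hn : 1 ≤ n) (q : Fin n → ℕ) (hq : ∀ i, 2 ≤ q i)
    (hcop : ∀ i j : Fin n, i ≠ j → Nat.Coprime (q i) (q j))
    (K : ℕ) (hK2 : 2 ≤ K) (hKN : K ≤ ∏ i, q i)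
    (x y : ℕ) (hx : x < K) (hy : y < K) (hxy : x ≠ y) :
    (∏ i, q i) < K * ∏ i ∈ Finset.univ.filter (fun i => ¬ (x % q i = y % q i)), q i := by
    classical
  set S := Finset.univ.filter (fun i => ¬ (x % q i = y % q i)) with hS
  set T := Finset.univ.filter (fun i : Fin n => x % q i = y % q i) with hT
  have hdvd : ((∏ i ∈ T, q i : ℕ) : ℤ) ∣ ((y : ℤ) - x) := by
    push_cast
    refine Finset.prod_dvd_of_coprime ?_ ?_
    · intro i hi j hj hij
      exact (Nat.isCoprime_iff_coprime).mpr (hcop i j hij)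
    · intro i hi
      have h : x % q i = y % q i := (Finset.mem_filter.mp hi).2
      exact Nat.ModEq.dvd h
  have hprodT : ∏ i ∈ T, q i < K := by
    have h1 : (∏ i ∈ T, q i) ∣ ((y:ℤ) - x).natAbs := by
      exact Int.natCast_dvd_natCast.mp (Int.dvd_natAbs.mpr hdvd)
    have h2 : ((y:ℤ) - x).natAbs ≠ 0 := by omega
    have h3 : ((y:ℤ) - x).natAbs < K := by omega
    exact lt_of_le_of_lt (Nat.le_of_dvd (Nat.pos_of_ne_zero h2) h1) h3
  have hsplit : (∏ i, q i) = (∏ i ∈ T, q i) * ∏ i ∈ S, q i := by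
    rw [hS, hT, Finset.prod_filter_mul_prod_filter_not]
  have hSpos : 0 < ∏ i ∈ S, q i :=
    Finset.prod_pos fun i _ => lt_of_lt_of_le two_pos (hq i)
  rw [hsplit]
  exact (Nat.mul_lt_mul_right hSpos).mpr hprodT
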